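/- arXiv:0910.4676 — 8 statements merged into one kernel-verified Lean document; each statement's English description precedes it below -/
import Mathlib

section
/- Let a(1) = 7 and, for n ≥ 2, a(n) = a(n-1) + gcd(n, a(n-1)). Then for every n ≥ 2, the difference a(n) - a(n-1) is either 1 or a prime number. -/
def RowInv (a : ℕ → ℕ) (n : ℕ) : Prop :=
  ∃ m, 1 ≤ m ∧ m ≤ n ∧ a n = 2*m + n ∧
    ∀ p, Nat.Prime p → p ∣ (2*m - 1) → 2*(n-m)+1 < p

lemma row_step (a : ℕ → ℕ)
    (hrec : ∀ n, 2 ≤ n → a n = a (n - 1) + Nat.gcd n (a (n - 1)))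
    (n : ℕ) (hn : 3 ≤ n) (h : RowInv a n) :
    (a (n+1) - a n = 1 ∨ Nat.Prime (a (n+1) - a n)) ∧ RowInv a (n+1) := by
  obtain ⟨m, hm1, hmn, han, hp⟩ := h
  set g := Nat.gcd (n+1) (a n) with hg
  have hrec' : a (n+1) = a n + g := by
    have := hrec (n+1) (by omega)
    simpa using this
  have hdiff : a (n+1) - a n = g := by omega
  have hgdvd1 : g ∣ n+1 := Nat.gcd_dvd_left _ _
  have hgdvd2 : g ∣ a n := Nat.gcd_dvd_right _ _
  -- g divides 2m-1 and 2(n+1-m)+1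
  have hsum1 : a n = (2*m - 1) + (n+1) := by omega
  have hsum2 : 2*(n+1) = (2*m - 1) + (2*(n+1-m)+1) := by omega
  have hgdvd3 : g ∣ 2*m - 1 := by
    have : g ∣ (2*m-1) + (n+1) := hsum1 ▸ hgdvd2
    exact (Nat.dvd_add_iff_left hgdvd1).mpr this
  have hgdvd4 : g ∣ 2*(n+1-m)+1 := by
    have h2 : g ∣ 2*(n+1) := Dvd.dvd.mul_left hgdvd1 2
    rw [hsum2] at h2
    exact (Nat.dvd_add_right hgdvd3).mp h2
  rcases eq_or_lt_of_le (Nat.one_le_iff_ne_zero.mpr (Nat.gcd_ne_zero_left (by omega) : g ≠ 0)) with h1 | h2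
  · -- g = 1
    have hg1 : g = 1 := h1.symm
    constructor
    · left; omega
    · refine ⟨m, hm1, by omega, by omega, ?_⟩
      intro p pp pd
      have hlt := hp p pp pd
      have podd : p % 2 = 1 := by
        rcases pp.eq_two_or_odd with h' | h'
        · rw [h'] at pd; obtain ⟨c, hc⟩ := pd; omega
        · exact h'
      -- p ≥ 2(n-m)+3; need p ≠ 2(n+1-m)+1 = 2(n-m)+3
      by_contra hcon
      push_neg at hcon
      have hpe : p = 2*(n+1-m)+1 := by omega
      -- then p ∣ n+1 and p ∣ a n, so p ∣ g = 1
      have hpd2 : p ∣ 2*(n+1) := by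
        rw [hsum2]; exact Nat.dvd_add pd (by rw [hpe])
      have hcop : Nat.Coprime p 2 :=
        pp.coprime_iff_not_dvd.mpr (by intro hd; have h2 := Nat.le_of_dvd (by norm_num) hd; have h3 := pp.two_le; omega)
      have hpdn : p ∣ n+1 :=
        hcop.dvd_of_dvd_mul_right (mul_comm 2 (n+1) ▸ hpd2)
      have hpda : p ∣ a n := by rw [hsum1]; exact Nat.dvd_add pd hpdn
      have : p ∣ g := Nat.dvd_gcd hpdn hpda
      rw [hg1] at this
      have := Nat.le_of_dvd one_pos this
      have := pp.two_le
      omega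
  · -- g ≥ 2
    have pp : Nat.Prime (Nat.minFac g) := Nat.minFac_prime (by omega)
    set p := Nat.minFac g with hpdef
    have hpg : p ∣ g := Nat.minFac_dvd g
    have pd1 : p ∣ 2*m-1 := hpg.trans hgdvd3
    have pd4 : p ∣ 2*(n+1-m)+1 := hpg.trans hgdvd4
    have hlt := hp p pp pd1
    have podd : p % 2 = 1 := by
      rcases pp.eq_two_or_odd with h' | h'
      · rw [h'] at pd1; obtain ⟨c, hc⟩ := pd1; omega
      · exact h' 
    have hple : p ≤ 2*(n+1-m)+1 := Nat.le_of_dvd (by omega) pd4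
    have hpeq : p = 2*(n+1-m)+1 := by omega
    have hgle : g ≤ 2*(n+1-m)+1 := Nat.le_of_dvd (by omega) hgdvd4
    have hpg' := Nat.le_of_dvd (by omega) hpg
    have hgp : g = p := by omega
    have gprime : Nat.Prime g := hgp ▸ pp
    constructor
    · right; rw [hdiff]; exact gprime
    · refine ⟨n+1, by omega, le_refl _, by omega, ?_⟩
      intro q qq _
      have := qq.two_le
      omega

lemma row_inv (a : ℕ → ℕ) (h1 : a 1 = 7)
    (hrec : ∀ n, 2 ≤ n → a n = a (n - 1) + Nat.gcd n (a (n - 1))) :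
    ∀ n, 3 ≤ n → RowInv a n := by
  have h2 : a 2 = 8 := by
    have := hrec 2 (by norm_num)
    simp at this
    rw [this, h1]; decide
  have h3 : a 3 = 9 := by
    have := hrec 3 (by norm_num)
    simp at this
    rw [this, h2]; decide
  intro n hn
  induction n, hn using Nat.le_induction with
  | base =>
    exact ⟨3, by norm_num, by norm_num, by rw [h3], fun p pp _ => by
      have := pp.two_le; omega⟩
  | succ n hn ih => exact (row_step a hrec n hn ih).2

theorem rowland (a : ℕ → ℕ) (h1 : a 1 = 7)
    (hrec : ∀ n, 2 ≤ n → a n = a (n - 1) + Nat.gcd n (a (n - 1))) :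
    ∀ n, 2 ≤ n → a n - a (n - 1) = 1 ∨ Nat.Prime (a n - a (n - 1)) := by
  have h2 : a 2 = 8 := by
    have := hrec 2 (by norm_num)
    simp at this
    rw [this, h1]; decide
  have h3 : a 3 = 9 := by
    have := hrec 3 (by norm_num)
    simp at this
    rw [this, h2]; decide
  intro n hn
  rcases Nat.lt_or_ge n 4 with h4 | h4
  · interval_cases n
    · left; simp [h2, h1]
    · left; simp [h3, h2]
  · have hstep := (row_step a hrec (n-1) (by omega) (row_inv a h1 hrec (n-1) (by omega))).1
    have : n - 1 + 1 = n := by omega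
    rw [this] at hstep
    exact hstep
end

section
/- Let m ≥ 2 and let c(m-1) = t be such that p := gcd(m, t) is prime and t + p = 3m. Define c(n) = c(n-1) + gcd(n, c(n-1)) for n ≥ m. Then for every n ≥ m, the difference c(n) - c(n-1) is either 1 or a prime. -/
theorem rowland_3m (m t : ℕ) (c : ℕ → ℕ) (hm : 2 ≤ m)
    (hinit : c (m - 1) = t)
    (hp : Nat.Prime (Nat.gcd m t))
    (hsum : t + Nat.gcd m t = 3 * m)
    (hrec : ∀ n, m ≤ n → c n = c (n - 1) + Nat.gcd n (c (n - 1))) :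
    ∀ n, m ≤ n → c n - c (n - 1) = 1 ∨ Nat.Prime (c n - c (n - 1)) := by
  have hcm : c m = 3 * m := by
    have h := hrec m le_rfl
    rw [hinit, hsum] at h
    exact h
  have inv : ∀ j : ℕ, ∃ n₀ k, m + j = n₀ + k ∧ m ≤ n₀ ∧
      c (m + j) = 3 * n₀ + k ∧ 2 * k + 1 < Nat.minFac (2 * n₀ - 1) ∧
      (Nat.gcd (m + j) (c (m + j - 1)) = 1 ∨
        Nat.Prime (Nat.gcd (m + j) (c (m + j - 1)))) := by
    intro j
    induction j with
    | zero =>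
      refine ⟨m, 0, by omega, le_rfl, by simpa using hcm, ?_, ?_⟩
      · exact (Nat.minFac_prime (by omega : 2 * m - 1 ≠ 1)).one_lt
      · right
        have h0 : m + 0 - 1 = m - 1 := by omega
        rw [h0, hinit]
        simpa using hp
    | succ j ih =>
      obtain ⟨n₀, k, hnk, hmn₀, hc, hk, _⟩ := ih
      set n := m + j with hn
      have hq_prime : Nat.Prime (Nat.minFac (2 * n₀ - 1)) :=
        Nat.minFac_prime (by omega)
      have hq_dvd : Nat.minFac (2 * n₀ - 1) ∣ 2 * n₀ - 1 := Nat.minFac_dvd _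
      have hodd : ¬ (2 ∣ 2 * n₀ - 1) := by omega
      have hcn : c n = (2 * n₀ - 1) + (n + 1) := by omega
      have hg : Nat.gcd (n + 1) (c n) = Nat.gcd (n + 1) (2 * n₀ - 1) := by
        rw [hcn, Nat.gcd_add_self_right]
      have hrec1 : c (n + 1) = c n + Nat.gcd (n + 1) (c n) := by
        have h := hrec (n + 1) (by omega)
        simpa using h
      have hmj1 : m + (j + 1) = n + 1 := by omega
      rw [hmj1]
      have hsimp : n + 1 - 1 = n := by omega
      rw [hsimp]
      by_cases h1 : Nat.gcd (n + 1) (c n) = 1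
      · refine ⟨n₀, k + 1, by omega, hmn₀, by omega, ?_, Or.inl h1⟩
        by_contra hcon
        push_neg at hcon
        have hqodd : ¬ (2 ∣ Nat.minFac (2 * n₀ - 1)) :=
          fun hd => hodd (hd.trans hq_dvd)
        have hq3 : Nat.minFac (2 * n₀ - 1) = 2 * k + 3 := by omega
        have hdvd2 : Nat.minFac (2 * n₀ - 1) ∣ 2 * (n + 1) := by
          have heq : 2 * (n + 1) = (2 * n₀ - 1) + (2 * k + 3) := by omega
          rw [heq]
          exact Nat.dvd_add hq_dvd (by rw [hq3])
        have hdvdn : Nat.minFac (2 * n₀ - 1) ∣ n + 1 := by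
          rcases (Nat.Prime.dvd_mul hq_prime).mp hdvd2 with h | h
          · exfalso
            have h2 : Nat.minFac (2 * n₀ - 1) = 2 :=
              (Nat.prime_dvd_prime_iff_eq hq_prime Nat.prime_two).mp h
            omega
          · exact h
        have : Nat.minFac (2 * n₀ - 1) ∣ 1 := by
          have hd : Nat.minFac (2 * n₀ - 1) ∣ Nat.gcd (n + 1) (2 * n₀ - 1) :=
            Nat.dvd_gcd hdvdn hq_dvd
          rw [← hg, h1] at hd
          exact hd
        have := Nat.le_of_dvd one_pos this
        have := hq_prime.two_le
        omega
      · set g := Nat.gcd (n + 1) (c n) with hgdef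
        have hgdvd1 : g ∣ n + 1 := Nat.gcd_dvd_left _ _
        have hgdvd2 : g ∣ 2 * n₀ - 1 := by
          rw [hg]; exact Nat.gcd_dvd_right _ _
        have hgdvd3 : g ∣ 2 * k + 3 := by
          have hd : g ∣ 2 * (n + 1) := Dvd.dvd.mul_left hgdvd1 2
          have heq : 2 * (n + 1) = (2 * n₀ - 1) + (2 * k + 3) := by omega
          rw [heq] at hd
          exact (Nat.dvd_add_right hgdvd2).mp hd
        have hgle : g ≤ 2 * k + 3 := Nat.le_of_dvd (by omega) hgdvd3
        have hgodd : ¬ (2 ∣ g) := fun hd => hodd (hd.trans hgdvd2)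
        have hgpos : 0 < g := Nat.pos_of_dvd_of_pos hgdvd1 (by omega)
        have hmfp : Nat.Prime (Nat.minFac g) := Nat.minFac_prime h1
        have hmfd : Nat.minFac g ∣ 2 * n₀ - 1 := (Nat.minFac_dvd g).trans hgdvd2
        have hqle : Nat.minFac (2 * n₀ - 1) ≤ Nat.minFac g :=
          Nat.minFac_le_of_dvd hmfp.two_le hmfd
        have hmfle : Nat.minFac g ≤ g := Nat.minFac_le hgpos
        have hmfodd : ¬ (2 ∣ Nat.minFac g) := fun hd => hodd (hd.trans hmfd)
        have hgeq : Nat.minFac g = g := by omega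
        have hgprime : Nat.Prime g := hgeq ▸ hmfp
        refine ⟨n + 1, 0, by omega, by omega, ?_, ?_, Or.inr hgprime⟩
        · omega
        · exact (Nat.minFac_prime (by omega : 2 * (n + 1) - 1 ≠ 1)).one_lt
  intro n hn
  obtain ⟨j, rfl⟩ : ∃ j, n = m + j := ⟨n - m, by omega⟩
  obtain ⟨n₀, k, -, -, -, -, hdiff⟩ := inv j
  have h := hrec (m + j) (by omega)
  have heq : c (m + j) - c (m + j - 1) = Nat.gcd (m + j) (c (m + j - 1)) := by
    omega
  rw [heq]
  exact hdiff
end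

section
/- Let m ≥ 4 and let c(m-1) = t be such that p := gcd(m, t) is prime and t + p = 2m. Define c(n) = c(n-1) + gcd(n, c(n-1)) for n ≥ m. Then for every n ≥ m, the difference c(n) - c(n-1) is either 1 or a prime. -/
theorem rowland_2m (m t : ℕ) (c : ℕ → ℕ) (hm : 4 ≤ m)
    (hinit : c (m - 1) = t)
    (hp : Nat.Prime (Nat.gcd m t))
    (hsum : t + Nat.gcd m t = 2 * m)
    (hrec : ∀ n, m ≤ n → c n = c (n - 1) + Nat.gcd n (c (n - 1))) :
    ∀ n, m ≤ n → c n - c (n - 1) = 1 ∨ Nat.Prime (c n - c (n - 1)) := by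
  have key : ∀ n, m ≤ n →
      (∃ N, m ≤ N ∧ N ≤ n ∧ c n = N + n ∧ n < N - 1 + Nat.minFac (N - 1)) ∧
      (c n - c (n - 1) = 1 ∨ Nat.Prime (c n - c (n - 1))) := by
    intro n hn
    induction n, hn using Nat.le_induction with
    | base =>
      have hcm : c m = 2 * m := by
        rw [hrec m le_rfl, hinit, hsum]
      have h2 : 2 ≤ Nat.minFac (m - 1) :=
        (Nat.minFac_prime (by omega : m - 1 ≠ 1)).two_le
      constructor
      · exact ⟨m, le_rfl, le_rfl, by omega, by omega⟩
      · right
        have hle : t ≤ 2 * m := by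
          have := Nat.le.intro hsum
          omega
        have : c m - c (m - 1) = Nat.gcd m t := by
          rw [hcm, hinit]
          omega
        rw [this]; exact hp
    | succ n hn ih =>
      obtain ⟨⟨N, hmN, hNn, hcn, hlt⟩, _⟩ := ih
      set q := Nat.minFac (N - 1) with hqdef
      have hqp : Nat.Prime q := Nat.minFac_prime (by omega : N - 1 ≠ 1)
      have hq2 : 2 ≤ q := hqp.two_le
      have hqd : q ∣ N - 1 := Nat.minFac_dvd _
      have hc1 : c (n + 1) = c n + Nat.gcd (n + 1) (c n) := by
        have := hrec (n + 1) (by omega)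
        simpa using this
      set j := n + 2 - N with hjdef
      have hj2 : 2 ≤ j := by omega
      have hgcd : Nat.gcd (n + 1) (c n) = Nat.gcd j (N - 1) := by
        have e1 : c n = (N - 1) + (n + 1) := by omega
        have e2 : n + 1 = j + (N - 1) := by omega
        rw [e1, Nat.gcd_add_self_right, e2, Nat.gcd_add_self_left]
      have hd1 : (n + 1) - 1 = n := by omega
      rcases eq_or_lt_of_le (by omega : j ≤ q) with hjq | hjq
      · -- jump: gcd = q, reset at n+1
        have hg : Nat.gcd j (N - 1) = q := by
          rw [hjq]; exact Nat.gcd_eq_left hqd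
        have hcn1 : c (n + 1) = c n + q := by rw [hc1, hgcd, hg]
        have h2' : 2 ≤ Nat.minFac ((n + 1) - 1) :=
          (Nat.minFac_prime (by omega : (n + 1) - 1 ≠ 1)).two_le
        constructor
        · exact ⟨n + 1, by omega, le_rfl, by omega, by omega⟩
        · right
          have : c (n + 1) - c ((n + 1) - 1) = q := by
            rw [hd1]; omega
          rw [this]; exact hqp
      · -- no jump: gcd = 1
        have hg : Nat.gcd j (N - 1) = 1 := by
          by_contra h
          have hpos : 0 < Nat.gcd j (N - 1) :=
            Nat.gcd_pos_of_pos_left _ (by omega)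
          have hge2 : 2 ≤ Nat.gcd j (N - 1) := by omega
          have hdvd : Nat.gcd j (N - 1) ∣ N - 1 := Nat.gcd_dvd_right _ _
          have hle : q ≤ Nat.gcd j (N - 1) := Nat.minFac_le_of_dvd hge2 hdvd
          have hle2 : Nat.gcd j (N - 1) ≤ j := Nat.le_of_dvd (by omega) (Nat.gcd_dvd_left _ _)
          omega
        have hcn1 : c (n + 1) = c n + 1 := by rw [hc1, hgcd, hg]
        constructor
        · exact ⟨N, hmN, by omega, by omega, by omega⟩
        · left
          rw [hd1]; omega
  intro n hn
  exact (key n hn).2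
end

section
/- Let c satisfy c(n) = c(n-1) + gcd(n, c(n-1)) and define h(n) = c(n) - c(n-1). Suppose c(n₁) = 3·n₁ for some n₁ ≥ 2, and let n₂ be the smallest integer greater than n₁ with h(n₂) > 1. Then c(n₂) = 3·n₂ and h(n₂) is prime. -/
theorem rowland_lemma (c : ℕ → ℕ) (n₁ n₂ : ℕ) (hn₁ : 2 ≤ n₁)
    (hc₁ : c n₁ = 3 * n₁)
    (hrec : ∀ n, n₁ < n → c n = c (n - 1) + Nat.gcd n (c (n - 1)))
    (hn₂ : n₁ < n₂)
    (hbig : c n₂ - c (n₂ - 1) > 1)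
    (hleast : ∀ n, n₁ < n → n < n₂ → ¬ (c n - c (n - 1) > 1)) :
    c n₂ = 3 * n₂ ∧ Nat.Prime (c n₂ - c (n₂ - 1)) := by
  set d := 2 * n₁ - 1 with hd
  -- Step 1: between n₁ and n₂ the function grows by 1
  have key : ∀ n, n₁ ≤ n → n < n₂ → c n = 2 * n₁ + n := by
    intro n
    induction n with
    | zero => intro h1 _; omega
    | succ n ih =>
      intro h1 h2
      rcases eq_or_lt_of_le h1 with h | h
      · rw [← h, hc₁]; omega
      · have hn : n₁ ≤ n := by omega
        have ihn := ih hn (by omega)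
        have hr := hrec (n+1) (by omega)
        simp only [Nat.add_sub_cancel] at hr
        have hl := hleast (n+1) (by omega) h2
        simp only [Nat.add_sub_cancel] at hl
        have hg : 1 ≤ Nat.gcd (n+1) (c n) := Nat.gcd_pos_of_pos_left _ (by omega)
        omega
  have hcn2m1 : c (n₂ - 1) = 2 * n₁ + (n₂ - 1) :=
    key (n₂ - 1) (by omega) (by omega)
  -- Step 2: intermediate n are coprime to d
  have cop : ∀ n, n₁ < n → n < n₂ → Nat.gcd n d = 1 := by
    intro n h1 h2
    have hcn := key n (by omega) h2
    have hcn1 := key (n-1) (by omega) (by omega)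
    have hr := hrec n h1
    have hgd : Nat.gcd n (c (n-1)) = Nat.gcd n d := by
      have : c (n - 1) = d + n := by omega
      rw [this, Nat.gcd_add_self_right]
    omega
  -- Step 3: rewrite the gcd at n₂
  have hr2 := hrec n₂ hn₂
  have hgd2 : Nat.gcd n₂ (c (n₂ - 1)) = Nat.gcd n₂ d := by
    have : c (n₂ - 1) = d + n₂ := by omega
    rw [this, Nat.gcd_add_self_right]
  set g := Nat.gcd n₂ d with hgdef
  have hg1 : 1 < g := by omega
  set k := 2 * (n₂ - n₁) + 1 with hk
  have hgn : g ∣ n₂ := Nat.gcd_dvd_left _ _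
  have hgd' : g ∣ d := Nat.gcd_dvd_right _ _
  have hdodd : d % 2 = 1 := by omega
  have hgk : g ∣ k := by
    have h2n : g ∣ 2 * n₂ := hgn.mul_left 2
    have := Nat.dvd_sub h2n hgd'
    have heq : 2 * n₂ - d = k := by omega
    rwa [heq] at this
  -- Step 4: every prime factor of g equals k
  have hprimefac : ∀ q, Nat.Prime q → q ∣ g → q = k := by
    intro q hq hqg
    have hqd : q ∣ d := hqg.trans hgd'
    have hqn2 : q ∣ n₂ := hqg.trans hgn
    have hqodd : q % 2 = 1 := by
      rcases Nat.mod_two_eq_zero_or_one q with h2 | h2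
      · exfalso
        have h2q : 2 ∣ q := Nat.dvd_of_mod_eq_zero h2
        have h2d : 2 ∣ d := h2q.trans hqd
        omega
      · exact h2
    have hq3 : 3 ≤ q := by
      have := hq.two_le
      omega
    have hqk : q ∣ k := hqg.trans hgk
    have hqlek : q ≤ k := Nat.le_of_dvd (by omega) hqk
    set n := n₁ + (q - 1) / 2 with hn
    have h2n : 2 * n = d + q := by omega
    have hqdvd2n : q ∣ 2 * n := by
      rw [h2n]; exact Nat.dvd_add hqd dvd_rfl
    have hqn : q ∣ n := by
      have hcop : Nat.Coprime q 2 := by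
        rw [Nat.coprime_comm]
        exact (Nat.coprime_two_left).mpr (Nat.odd_iff.mpr hqodd)
      exact (Nat.Coprime.dvd_of_dvd_mul_left hcop hqdvd2n)
    have hn1n : n₁ < n := by omega
    have hnlen2 : n ≤ n₂ := by omega
    have hnn2 : n = n₂ := by
      by_contra hne
      have hlt : n < n₂ := by omega
      have hcop1 := cop n hn1n hlt
      have hdq : q ∣ Nat.gcd n d := Nat.dvd_gcd hqn hqd
      rw [hcop1] at hdq
      have := Nat.eq_one_of_dvd_one hdq
      omega
    omega
  -- g has a prime factor, which equals k
  obtain ⟨q, hq, hqg⟩ := Nat.exists_prime_and_dvd (show g ≠ 1 by omega)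
  have hqk := hprimefac q hq hqg
  have hkg : k ∣ g := hqk ▸ hqg
  have hgk' : g = k := Nat.dvd_antisymm hgk hkg
  have hkprime : Nat.Prime k := hqk ▸ hq
  constructor
  · omega
  · have : c n₂ - c (n₂ - 1) = k := by omega
    rw [this]; exact hkprime
end

section
/- For the Rowland sequence a(1) = 7, a(n) = a(n-1) + gcd(n, a(n-1)), and the sequence c₂ defined by c₂(1) = 4 and c₂(n) = c₂(n-1) + gcd(n, c₂(n-1)), one has a(n) = c₂(n) for all n ≥ 3. -/
theorem rowland_eq_c2 (a c : ℕ → ℕ)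
    (ha1 : a 1 = 7)
    (harec : ∀ n, 2 ≤ n → a n = a (n - 1) + Nat.gcd n (a (n - 1)))
    (hc1 : c 1 = 4)
    (hcrec : ∀ n, 2 ≤ n → c n = c (n - 1) + Nat.gcd n (c (n - 1))) :
    ∀ n, 3 ≤ n → a n = c n := by
  have ha2 : a 2 = 8 := by rw [harec 2 (by norm_num)]; norm_num [ha1]
  have ha3 : a 3 = 9 := by rw [harec 3 (by norm_num)]; norm_num [ha2]
  have hc2 : c 2 = 6 := by rw [hcrec 2 (by norm_num)]; norm_num [hc1]
  have hc3 : c 3 = 9 := by rw [hcrec 3 (by norm_num)]; norm_num [hc2]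
  intro n hn
  induction n with
  | zero => omega
  | succ m ih =>
    rcases Nat.lt_or_ge m 3 with h | h
    · interval_cases m <;> first | omega | (show a 3 = c 3; rw [ha3, hc3])
    · have h2 : 2 ≤ m + 1 := by omega
      rw [harec (m+1) h2, hcrec (m+1) h2]
      simp only [Nat.add_sub_cancel]
      rw [ih h]
end

section
/- If c(n) = c(n-1) + gcd(n, c(n-1)) and c(n-1) = 3(n-1), then gcd(n, c(n-1)) = gcd(n, 3(n-1)) = gcd(n, 3) ∈ {1, 3}, and hence the difference c(n) - c(n-1) is 1 or 3 (both 1 or prime). -/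
theorem step_after_3_n_sub_1 (c : ℕ → ℕ) (n : ℕ) (hn : 2 ≤ n)
    (hval : c (n - 1) = 3 * (n - 1))
    (hrec : c n = c (n - 1) + Nat.gcd n (c (n - 1))) :
    Nat.gcd n (c (n - 1)) = Nat.gcd n 3 ∧
      (Nat.gcd n 3 = 1 ∨ Nat.gcd n 3 = 3) ∧
      (c n - c (n - 1) = 1 ∨ Nat.Prime (c n - c (n - 1))) := by
  have hg : Nat.gcd n (c (n - 1)) = Nat.gcd n 3 := by
    rw [hval]
    apply Nat.dvd_antisymm
    · apply Nat.dvd_gcd (Nat.gcd_dvd_left _ _)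
      have h1 : Nat.gcd n (3 * (n - 1)) ∣ 3 * n := Dvd.dvd.mul_left (Nat.gcd_dvd_left _ _) 3
      have h2 : Nat.gcd n (3 * (n - 1)) ∣ 3 * (n - 1) := Nat.gcd_dvd_right _ _
      have h3 : 3 * n - 3 * (n - 1) = 3 := by omega
      have := Nat.dvd_sub h1 h2
      rwa [h3] at this
    · exact Nat.dvd_gcd (Nat.gcd_dvd_left _ _)
        (Dvd.dvd.mul_right (Nat.gcd_dvd_right _ _) _)
  have h3 : Nat.gcd n 3 = 1 ∨ Nat.gcd n 3 = 3 :=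
    (Nat.prime_three).eq_one_or_self_of_dvd _ (Nat.gcd_dvd_right n 3)
  refine ⟨hg, h3, ?_⟩
  have hd : c n - c (n - 1) = Nat.gcd n 3 := by omega
  rcases h3 with h | h
  · left; omega
  · right; rw [hd, h]; exact Nat.prime_three
end

section
/- In the 3m-setting (c(n₁) = 3·n₁, c(n) = c(n-1) + gcd(n, c(n-1))), whenever a difference h(n) = c(n) - c(n-1) is greater than 1, the subsequent value again satisfies c(n) = 3n, so the invariant c(n) = 3n is restored at every prime step. -/
theorem invariant_restored (c : ℕ → ℕ) (n₁ : ℕ) (hn₁ : 2 ≤ n₁)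
    (hc₁ : c n₁ = 3 * n₁)
    (hrec : ∀ n, n₁ < n → c n = c (n - 1) + Nat.gcd n (c (n - 1))) :
    ∀ n, n₁ < n → c n - c (n - 1) > 1 → c n = 3 * n := by
  have key : ∀ n, n₁ ≤ n →
      (∃ k, n₁ ≤ k ∧ k ≤ n ∧ c n = n + 2 * k ∧
        ∀ j, k < j → j ≤ n → Nat.gcd j (2 * k - 1) = 1) ∧
      (n₁ < n → (c n = 3 * n ∨ c n = c (n - 1) + 1)) := by
    intro n hn
    induction n with
    | zero => omega
    | succ n ih =>
      rcases Nat.lt_or_ge n₁ (n + 1) with hlt | hge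
      · -- n₁ ≤ n
        have hn' : n₁ ≤ n := by omega
        obtain ⟨⟨k, hk1, hk2, hck, hside⟩, _⟩ := ih hn'
        have hrec' : c (n + 1) = c n + Nat.gcd (n + 1) (c n) := by
          have := hrec (n + 1) (by omega)
          simpa using this
        have hgeq : Nat.gcd (n + 1) (c n) = Nat.gcd (n + 1) (2 * k - 1) := by
          rw [hck]
          have h1 : n + 2 * k = (2 * k - 1) + (n + 1) := by omega
          rw [h1, Nat.gcd_add_self_right]
        set g := Nat.gcd (n + 1) (2 * k - 1) with hgdef
        by_cases hg1 : g = 1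
        · refine ⟨⟨k, hk1, by omega, by omega, ?_⟩, fun _ => Or.inr (by simpa using (by omega : c (n+1) = c n + 1))⟩
          intro j hj1 hj2
          rcases Nat.lt_or_ge j (n + 1) with h | h
          · exact hside j hj1 (by omega)
          · have : j = n + 1 := by omega
            rw [this]; exact hg1
        · -- g > 1 : show c (n+1) = 3 * (n+1)
          have hgpos : 0 < g := Nat.gcd_pos_of_pos_left _ (by omega)
          have hdl : g ∣ n + 1 := Nat.gcd_dvd_left _ _
          have hdr : g ∣ 2 * k - 1 := Nat.gcd_dvd_right _ _
          have hodd : Odd (2 * k - 1) := by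
            refine ⟨k - 1, by omega⟩
          have hgodd : Odd g := hodd.of_dvd_nat hdr  -- maybe wrong name
          have hdm : g ∣ 2 * (n + 1) - (2 * k - 1) :=
            Nat.dvd_sub (Dvd.dvd.mul_left hdl 2) hdr
          have hmpos : 0 < 2 * (n + 1) - (2 * k - 1) := by omega
          have hle : g ≤ 2 * (n + 1) - (2 * k - 1) := Nat.le_of_dvd hmpos hdm
          have hgm : g = 2 * (n + 1) - (2 * k - 1) := by
            by_contra hne
            have hlt' : g < 2 * (n + 1) - (2 * k - 1) := by omega
            obtain ⟨t, ht⟩ := hgodd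
            have ht1 : 1 ≤ t := by omega
            set n' := k + t with hn'def
            have h2n' : 2 * n' = (2 * k - 1) + g := by omega
            have hdn2 : g ∣ 2 * n' := by rw [h2n']; exact Nat.dvd_add hdr dvd_rfl
            have hcop : Nat.Coprime g 2 := Nat.coprime_two_right.mpr ⟨t, ht⟩
            have hdn' : g ∣ n' := (Nat.Coprime.dvd_of_dvd_mul_left hcop hdn2)
            have hgcd1 : Nat.gcd n' (2 * k - 1) = 1 := hside n' (by omega) (by omega)
            have : g ∣ Nat.gcd n' (2 * k - 1) := Nat.dvd_gcd hdn' hdr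
            rw [hgcd1] at this
            exact hg1 (Nat.eq_one_of_dvd_one this)
          have hc3 : c (n + 1) = 3 * (n + 1) := by omega
          refine ⟨⟨n + 1, by omega, le_refl _, by omega, ?_⟩, fun _ => Or.inl hc3⟩
          intro j hj1 hj2; omega
      · -- n₁ = n + 1
        have heq : n₁ = n + 1 := by omega
        refine ⟨⟨n + 1, by omega, le_refl _, by rw [← heq, hc₁]; omega, ?_⟩, ?_⟩
        · intro j hj1 hj2; omega
        · intro h; omega
  intro n hn hdiff
  obtain ⟨_, h2⟩ := key n (le_of_lt hn)
  rcases h2 hn with h | h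
  · exact h
  · omega
end

section
/- In the 2m-setting: if c satisfies c(n) = c(n-1) + gcd(n, c(n-1)) for n ≥ m, with m ≥ 4, gcd(m, c(m-1)) = p prime and c(m-1) + p = 2m, and n₂ > m is the smallest index with c(n₂) - c(n₂-1) > 1 (assuming c(n) = 2n holds at some index), then c(n₂) = 2·n₂ and c(n₂) - c(n₂-1) is prime. -/
theorem rowland_2m_lemma (c : ℕ → ℕ) (m n₂ : ℕ) (hm : 4 ≤ m)
    (hrec : ∀ n, m ≤ n → c n = c (n - 1) + Nat.gcd n (c (n - 1)))
    (hp : Nat.Prime (Nat.gcd m (c (m - 1))))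
    (hsum : c (m - 1) + Nat.gcd m (c (m - 1)) = 2 * m)
    (hn₂ : m < n₂)
    (hbig : c n₂ - c (n₂ - 1) > 1)
    (hleast : ∀ n, m < n → n < n₂ → ¬ (c n - c (n - 1) > 1)) :
    c n₂ = 2 * n₂ ∧ Nat.Prime (c n₂ - c (n₂ - 1)) := by
  -- Step 1: c n = n + m for all m ≤ n < n₂
  have key : ∀ n, m ≤ n → n < n₂ → c n = n + m := by
    intro n
    induction n using Nat.strong_induction_on with
    | _ n ih =>
      intro hmn hnn
      rcases eq_or_lt_of_le hmn with h | h
      · subst h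
        rw [hrec m le_rfl, hsum]; ring
      · have hprev : c (n - 1) = (n - 1) + m := ih (n - 1) (by omega) (by omega) (by omega)
        have hr := hrec n (by omega)
        have hgpos : 0 < Nat.gcd n (c (n - 1)) := Nat.gcd_pos_of_pos_left _ (by omega)
        have hle := hleast n h hnn
        omega
  have h1 : c (n₂ - 1) = (n₂ - 1) + m := key _ (by omega) (by omega)
  have hr := hrec n₂ (by omega)
  have hgeq : Nat.gcd n₂ (c (n₂ - 1)) = Nat.gcd n₂ (m - 1) := by
    rw [h1]
    have : (n₂ - 1) + m = (m - 1) + n₂ := by omega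
    rw [this, Nat.gcd_add_self_right]
  have hgbig : 1 < Nat.gcd n₂ (m - 1) := by omega
  set r := (Nat.gcd n₂ (m - 1)).minFac with hrdef
  have hrp : r.Prime := Nat.minFac_prime (by omega)
  have hrd := Nat.minFac_dvd (Nat.gcd n₂ (m - 1))
  have hr1 : r ∣ n₂ := hrd.trans (Nat.gcd_dvd_left _ _)
  have hr2 : r ∣ m - 1 := hrd.trans (Nat.gcd_dvd_right _ _)
  have hr3 : r ∣ n₂ - (m - 1) := Nat.dvd_sub hr1 hr2
  have hlow : m - 1 + r ≤ n₂ := by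
    have := Nat.le_of_dvd (by omega) hr3
    omega
  have hhigh : n₂ ≤ m - 1 + r := by
    by_contra hc
    push_neg at hc
    have hr2' : 2 ≤ r := hrp.two_le
    have hprev : c (m - 1 + r - 1) = (m - 1 + r - 1) + m := key _ (by omega) (by omega)
    have hrn := hrec (m - 1 + r) (by omega)
    have hg2 : r ∣ Nat.gcd (m - 1 + r) (c (m - 1 + r - 1)) := by
      apply Nat.dvd_gcd
      · exact Nat.dvd_add hr2 dvd_rfl
      · rw [hprev]
        have : (m - 1 + r - 1) + m = (m - 1 + r) + (m - 1) := by omega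
        rw [this]
        exact Nat.dvd_add (Nat.dvd_add hr2 dvd_rfl) hr2
    have := Nat.le_of_dvd (Nat.gcd_pos_of_pos_left _ (by omega)) hg2
    exact hleast (m - 1 + r) (by omega) hc (by omega)
  have hn₂eq : n₂ = m - 1 + r := by omega
  have hgr : Nat.gcd n₂ (m - 1) = r := by
    have hd : Nat.gcd n₂ (m - 1) ∣ r := by
      have := Nat.dvd_sub (Nat.gcd_dvd_left n₂ (m - 1)) (Nat.gcd_dvd_right n₂ (m - 1))
      rw [hn₂eq] at this ⊢
      rwa [Nat.add_sub_cancel_left] at this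
    exact Nat.dvd_antisymm hd hrd
  constructor
  · omega
  · have : c n₂ - c (n₂ - 1) = r := by omega
    rw [this]; exact hrp
end
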